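/- Let n ≥ 1 and N be natural numbers with N even, and let δ : Fin n → ℕ satisfy ∑ i, δ i = N and 2 · δ i ≤ N for every i. Let b : Fin N → Fin n be the block function determined by δ (that is, b x = i exactly when ∑_{i' < i} δ i' ≤ x < ∑_{i' ≤ i} δ i'). For x ∈ Fin N let P x = exp(2·π·I·x/N) ∈ ℂ be the corresponding N-th root of unity. Then there exists a fixed-point-free involution σ of Fin N such that: (i) b (σ x) ≠ b x for every x, and (ii) the chords joining matched points are pairwise disjoint: for all x, y ∈ Fin N, if the pair {x, σ x} is distinct from the pair {y, σ y}, then the open segments openSegment ℝ (P x) (P (σ x)) and openSegment ℝ (P y) (P (σ y)) are disjoint. -/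

import Mathlib

open Finset

noncomputable def pt (θ : ℝ) : ℂ := Complex.exp (θ * Complex.I)

lemma pt_re (θ : ℝ) : (pt θ).re = Real.cos θ := by simp [pt]
lemma pt_im (θ : ℝ) : (pt θ).im = Real.sin θ := by simp [pt]
lemma pt_add_two_pi (θ : ℝ) : pt (θ + 2 * Real.pi) = pt θ := by
  unfold pt
  rw [Complex.ofReal_add, add_mul, Complex.exp_add,
    show ((2 * Real.pi : ℝ) : ℂ) * Complex.I = 2 * (Real.pi : ℂ) * Complex.I by push_cast; ring,
    Complex.exp_two_pi_mul_I, mul_one]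

noncomputable def Ff (A B z : ℂ) : ℝ := (B - A).re * (z - A).im - (B - A).im * (z - A).re

lemma Ff_affine (A B u v : ℂ) (a c : ℝ) (hac : a + c = 1) :
    Ff A B (a • u + c • v) = a * Ff A B u + c * Ff A B v := by
  simp only [Ff, Complex.real_smul, Complex.sub_re, Complex.sub_im, Complex.add_re,
    Complex.add_im, Complex.mul_re, Complex.mul_im, Complex.ofReal_re, Complex.ofReal_im]
  linear_combination ((B.re - A.re) * A.im - (B.im - A.im) * A.re) * hac

lemma Ff_self_left (A B : ℂ) : Ff A B A = 0 := by simp [Ff]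
lemma Ff_self_right (A B : ℂ) : Ff A B B = 0 := by simp [Ff]; ring

lemma trig4 (u v : ℝ) : Real.sin (2*u) + Real.sin (2*v) - Real.sin (2*(u+v)) =
    4 * Real.sin u * Real.sin v * Real.sin (u+v) := by
  rw [Real.sin_two_mul, Real.sin_two_mul, Real.sin_two_mul, Real.sin_add, Real.cos_add]
  linear_combination (-2*Real.sin u*Real.cos u) * (Real.sin_sq_add_cos_sq v) +
    (-2*Real.sin v*Real.cos v) * (Real.sin_sq_add_cos_sq u)

lemma Ff_pt (α β θ : ℝ) : Ff (pt α) (pt β) (pt θ) =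
    4 * Real.sin ((θ-β)/2) * Real.sin ((β-α)/2) * Real.sin ((θ-α)/2) := by
  have h := trig4 ((θ-β)/2) ((β-α)/2)
  simp only [Ff, Complex.sub_re, Complex.sub_im, pt_re, pt_im]
  rw [show 2*((θ-β)/2) = θ - β by ring, show 2*((β-α)/2) = β - α by ring,
    show 2*((θ-β)/2 + (β-α)/2) = θ - α by ring, show (θ-β)/2 + (β-α)/2 = (θ-α)/2 by ring] at h
  rw [Real.sin_sub, Real.sin_sub, Real.sin_sub] at h
  linear_combination h

lemma sin_pos_of (x : ℝ) (h0 : 0 < x) (h1 : x < 2 * Real.pi) : 0 < Real.sin (x / 2) :=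
  Real.sin_pos_of_pos_of_lt_pi (by linarith) (by linarith)

lemma Ff_neg_of_between (α β θ : ℝ) (h1 : α < θ) (h2 : θ < β) (h3 : β < α + 2 * Real.pi) :
    Ff (pt α) (pt β) (pt θ) < 0 := by
  rw [Ff_pt]
  have hπ := Real.pi_pos
  have s1 : Real.sin ((θ - β)/2) < 0 := by
    have : 0 < Real.sin ((β - θ)/2) := sin_pos_of _ (by linarith) (by linarith)
    rw [show (θ - β)/2 = -((β - θ)/2) by ring, Real.sin_neg]; linarith
  have s2 : 0 < Real.sin ((β - α)/2) := sin_pos_of _ (by linarith) (by linarith)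
  have s3 : 0 < Real.sin ((θ - α)/2) := sin_pos_of _ (by linarith) (by linarith)
  have := mul_pos (mul_pos s2 s3) (neg_pos.mpr s1)
  nlinarith [this]

lemma Ff_pos_of_outside (α β θ : ℝ) (h0 : α < β) (h1 : β < θ) (h2 : θ < α + 2 * Real.pi) :
    0 < Ff (pt α) (pt β) (pt θ) := by
  rw [Ff_pt]
  have hπ := Real.pi_pos
  have s1 : 0 < Real.sin ((θ - β)/2) := sin_pos_of _ (by linarith) (by linarith)
  have s2 : 0 < Real.sin ((β - α)/2) := sin_pos_of _ (by linarith) (by linarith)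
  have s3 : 0 < Real.sin ((θ - α)/2) := sin_pos_of _ (by linarith) (by linarith)
  positivity

lemma seg_subset_zero (A B : ℂ) : ∀ z ∈ openSegment ℝ A B, Ff A B z = 0 := by
  rintro z ⟨a, c, ha, hc, hac, rfl⟩
  rw [Ff_affine A B A B a c hac, Ff_self_left, Ff_self_right]; ring

lemma seg_subset_sign (A B u v : ℂ) (h : Ff A B u < 0 ∧ Ff A B v < 0 ∨ 0 < Ff A B u ∧ 0 < Ff A B v) :
    ∀ z ∈ openSegment ℝ u v, Ff A B z ≠ 0 := by
  rintro z ⟨a, c, ha, hc, hac, rfl⟩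
  rw [Ff_affine A B u v a c hac]
  rcases h with ⟨h1, h2⟩ | ⟨h1, h2⟩
  · nlinarith
  · nlinarith

/-- Main geometric disjointness: chord (α,β) vs chord (γ,δ) with γ,δ both strictly
inside arc (α,β) or both strictly in arc (β,α+2π). -/
lemma chords_disjoint (α β γ δ : ℝ) (hab : α < β) (hb2 : β < α + 2 * Real.pi)
    (h : (α < γ ∧ γ < β) ∧ (α < δ ∧ δ < β) ∨
         (β < γ ∧ γ < α + 2 * Real.pi) ∧ (β < δ ∧ δ < α + 2 * Real.pi)) :
    Disjoint (openSegment ℝ (pt α) (pt β)) (openSegment ℝ (pt γ) (pt δ)) := by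
  rw [Set.disjoint_left]
  intro z hz1 hz2
  have h0 := seg_subset_zero (pt α) (pt β) z hz1
  refine seg_subset_sign (pt α) (pt β) (pt γ) (pt δ) ?_ z hz2 h0
  rcases h with ⟨⟨g1, g2⟩, d1, d2⟩ | ⟨⟨g1, g2⟩, d1, d2⟩
  · exact Or.inl ⟨Ff_neg_of_between _ _ _ g1 g2 hb2, Ff_neg_of_between _ _ _ d1 d2 hb2⟩
  · exact Or.inr ⟨Ff_pos_of_outside _ _ _ hab g1 g2, Ff_pos_of_outside _ _ _ hab d1 d2⟩

def Sepp {N : ℕ} (a b x : Fin N) : Prop := (a < x ∧ x < b) ∨ (b < x ∧ x < a)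

lemma Sepp_swap {N : ℕ} (a b x : Fin N) : Sepp a b x ↔ Sepp b a x := Or.comm

noncomputable def θf (N : ℕ) (k : Fin N) : ℝ := 2 * Real.pi * k / N

lemma θf_nonneg {N : ℕ} (k : Fin N) : 0 ≤ θf N k := by
  unfold θf
  have hπ := Real.pi_pos
  have : (0:ℝ) ≤ (k:ℕ) := Nat.cast_nonneg _
  have hN : (0:ℝ) < N := by exact_mod_cast Nat.pos_of_ne_zero (by rintro rfl; exact k.elim0)
  positivity

lemma θf_lt_two_pi {N : ℕ} (k : Fin N) : θf N k < 2 * Real.pi := by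
  have hπ := Real.pi_pos
  have hN : (0:ℝ) < N := by exact_mod_cast Nat.pos_of_ne_zero (by rintro rfl; exact k.elim0)
  have hk : ((k:ℕ) : ℝ) < N := by exact_mod_cast k.isLt
  rw [θf, div_lt_iff₀ hN]
  nlinarith

lemma θf_strictMono {N : ℕ} {a b : Fin N} (h : a < b) : θf N a < θf N b := by
  have hπ := Real.pi_pos
  have hN : (0:ℝ) < N := by exact_mod_cast Nat.pos_of_ne_zero (by rintro rfl; exact a.elim0)
  have hab : ((a:ℕ) : ℝ) < ((b:ℕ) : ℝ) := by exact_mod_cast h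
  rw [θf, θf, div_lt_div_iff₀ hN hN]
  have h2 : (0:ℝ) < 2 * Real.pi := by linarith
  exact mul_lt_mul_of_pos_right (mul_lt_mul_of_pos_left hab h2) hN

lemma main_geom_aux {N : ℕ} (x x' y y' : Fin N) (hxx' : x < x')
    (hy1 : y ≠ x) (hy2 : y ≠ x') (hy'1 : y' ≠ x) (hy'2 : y' ≠ x')
    (hsep : Sepp x x' y ↔ Sepp x x' y') :
    Disjoint (openSegment ℝ (pt (θf N x)) (pt (θf N x')))
      (openSegment ℝ (pt (θf N y)) (pt (θf N y'))) := by
  have hπ := Real.pi_pos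
  have hab : θf N x < θf N x' := θf_strictMono hxx'
  have hb2 : θf N x' < θf N x + 2 * Real.pi := by
    have := θf_lt_two_pi x'
    have := θf_nonneg x
    linarith
  have key : ∀ z : Fin N, z ≠ x → z ≠ x' → ¬ Sepp x x' z →
      ∃ γ : ℝ, pt γ = pt (θf N z) ∧ θf N x' < γ ∧ γ < θf N x + 2 * Real.pi := by
    intro z hz1 hz2 hns
    have hcase : z < x ∨ x' < z := by
      rcases lt_trichotomy z x with h | h | h
      · exact Or.inl h
      · exact absurd h hz1
      rcases lt_trichotomy z x' with h' | h' | h'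
      · exact absurd (Or.inl ⟨h, h'⟩) hns
      · exact absurd h' hz2
      · exact Or.inr h'
    rcases hcase with h | h
    · refine ⟨θf N z + 2 * Real.pi, pt_add_two_pi _, ?_, ?_⟩
      · have := θf_lt_two_pi x'
        have := θf_nonneg z
        linarith
      · have := θf_strictMono h
        linarith
    · refine ⟨θf N z, rfl, θf_strictMono h, ?_⟩
      have := θf_lt_two_pi z
      have := θf_nonneg x
      linarith
  by_cases hins : Sepp x x' y
  · have hins' : Sepp x x' y' := hsep.mp hins
    have hy : x < y ∧ y < x' := by
      rcases hins with h | ⟨h1, h2⟩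
      · exact h
      · exact absurd (h2.trans (hxx'.trans h1)) (lt_irrefl _)
    have hy' : x < y' ∧ y' < x' := by
      rcases hins' with h | ⟨h1, h2⟩
      · exact h
      · exact absurd (h2.trans (hxx'.trans h1)) (lt_irrefl _)
    exact chords_disjoint _ _ _ _ hab hb2
      (Or.inl ⟨⟨θf_strictMono hy.1, θf_strictMono hy.2⟩,
        θf_strictMono hy'.1, θf_strictMono hy'.2⟩)
  · have hins' : ¬ Sepp x x' y' := fun h => hins (hsep.mpr h)
    obtain ⟨γ, hγeq, hγ1, hγ2⟩ := key y hy1 hy2 hins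
    obtain ⟨γ', hγeq', hγ1', hγ2'⟩ := key y' hy'1 hy'2 hins'
    rw [← hγeq, ← hγeq']
    exact chords_disjoint _ _ _ _ hab hb2 (Or.inr ⟨⟨hγ1, hγ2⟩, hγ1', hγ2'⟩)

lemma main_geom {N : ℕ} (x x' y y' : Fin N) (hxx' : x ≠ x')
    (hy1 : y ≠ x) (hy2 : y ≠ x') (hy'1 : y' ≠ x) (hy'2 : y' ≠ x')
    (hsep : Sepp x x' y ↔ Sepp x x' y') :
    Disjoint (openSegment ℝ (pt (θf N x)) (pt (θf N x')))
      (openSegment ℝ (pt (θf N y)) (pt (θf N y'))) := by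
  rcases hxx'.lt_or_gt with h | h
  · exact main_geom_aux x x' y y' h hy1 hy2 hy'1 hy'2 hsep
  · rw [openSegment_symm]
    exact main_geom_aux x' x y y' h hy2 hy1 hy'2 hy'1
      (((Sepp_swap x x' y).symm.trans hsep).trans (Sepp_swap x x' y'))

lemma adjacent_sep {N : ℕ} {p q u v : Fin N} (hpq : p < q)
    (hu1 : u ≠ p) (hu2 : u ≠ q) (hv1 : v ≠ p) (hv2 : v ≠ q)
    (hu : ¬(p < u ∧ u < q)) (hv : ¬(p < v ∧ v < q)) :
    Sepp u v p ↔ Sepp u v q := by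
  have hu1' : (u : ℕ) ≠ (p : ℕ) := fun h => hu1 (Fin.ext h)
  have hu2' : (u : ℕ) ≠ (q : ℕ) := fun h => hu2 (Fin.ext h)
  have hv1' : (v : ℕ) ≠ (p : ℕ) := fun h => hv1 (Fin.ext h)
  have hv2' : (v : ℕ) ≠ (q : ℕ) := fun h => hv2 (Fin.ext h)
  unfold Sepp
  simp only [Fin.lt_def] at hpq hu hv ⊢
  omega

lemma wrap_sep {N : ℕ} {p q u v : Fin N} (hu : q < u ∧ u < p) (hv : q < v ∧ v < p) :
    Sepp u v p ↔ Sepp u v q := by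
  unfold Sepp
  simp only [Fin.lt_def] at hu hv ⊢
  omega

lemma matching_exists {N n : ℕ} (b : Fin N → Fin n) :
    ∀ (m : ℕ) (S : Finset (Fin N)), S.card = m → Even m →
    (∀ i : Fin n, 2 * (S.filter fun x => b x = i).card ≤ m) →
    ∃ σ : Fin N → Fin N,
      (∀ x, x ∉ S → σ x = x) ∧
      (∀ x ∈ S, σ x ∈ S) ∧
      (∀ x ∈ S, σ (σ x) = x) ∧
      (∀ x ∈ S, σ x ≠ x) ∧
      (∀ x ∈ S, b (σ x) ≠ b x) ∧
      (∀ x ∈ S, ∀ y ∈ S, ({x, σ x} : Finset (Fin N)) ≠ {y, σ y} →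
        (Sepp x (σ x) y ↔ Sepp x (σ x) (σ y))) := by
  intro m
  induction m using Nat.strong_induction_on with
  | _ m ih =>
    intro S hcard heven hcnt
    rcases Nat.eq_zero_or_pos m with hm0 | hmpos
    · subst hm0
      have hS : S = ∅ := Finset.card_eq_zero.mp hcard
      subst hS
      exact ⟨id, fun x _ => rfl, fun x hx => absurd hx (by simp),
        fun x hx => absurd hx (by simp), fun x hx => absurd hx (by simp),
        fun x hx => absurd hx (by simp), fun x hx => absurd hx (by simp)⟩
    obtain ⟨k, hk⟩ := heven
    have hm2 : 2 ≤ m := by omega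
    have hSne : S.Nonempty := Finset.card_pos.mp (by omega)
    obtain ⟨x₀, hx₀⟩ := hSne
    obtain ⟨i₀, -, hi₀max⟩ := Finset.exists_max_image (univ : Finset (Fin n))
      (fun i => (S.filter fun x => b x = i).card) ⟨b x₀, mem_univ _⟩
    set T := S.filter fun x => b x = i₀ with hTdef
    have hTne : T.Nonempty := by
      have h1 : 0 < (S.filter fun x => b x = b x₀).card :=
        card_pos.mpr ⟨x₀, mem_filter.mpr ⟨hx₀, rfl⟩⟩
      exact card_pos.mp (lt_of_lt_of_le h1 (hi₀max _ (mem_univ _)))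
    have hTmem : ∀ x, x ∈ T ↔ x ∈ S ∧ b x = i₀ := fun x => mem_filter
    obtain ⟨q₀, hq₀S, hq₀b⟩ : ∃ x ∈ S, b x ≠ i₀ := by
      by_contra hall
      push_neg at hall
      have hTS : T = S := Finset.filter_eq_self.mpr hall
      have h2 := hcnt i₀
      rw [← hTdef, hTS, hcard] at h2
      omega
    -- select the adjacent pair (p, q)
    obtain ⟨p, q, hpS, hqS, hbp, hbq, hadj⟩ :
        ∃ p q : Fin N, p ∈ S ∧ q ∈ S ∧ b p = i₀ ∧ b q ≠ i₀ ∧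
          ((p < q ∧ ∀ e ∈ S, ¬(p < e ∧ e < q)) ∨
           (q < p ∧ ∀ e ∈ S, e ≠ p → e ≠ q → q < e ∧ e < p)) := by
      have hcS : T.max' hTne ∈ S := ((hTmem _).mp (T.max'_mem hTne)).1
      have hcb : b (T.max' hTne) = i₀ := ((hTmem _).mp (T.max'_mem hTne)).2
      set c := T.max' hTne with hcdef
      by_cases hU : (S.filter fun e => c < e).Nonempty
      · set q := (S.filter fun e => c < e).min' hU with hqdef
        have hqmem := (S.filter fun e => c < e).min'_mem hU
        rw [mem_filter] at hqmem
        refine ⟨c, q, hcS, hqmem.1, hcb, ?_, Or.inl ⟨hqmem.2, ?_⟩⟩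
        · intro hbq
          have : q ∈ T := (hTmem q).mpr ⟨hqmem.1, hbq⟩
          exact absurd (T.le_max' q this) (not_le.mpr hqmem.2)
        · rintro e heS ⟨h1, h2⟩
          have : q ≤ e := by
            rw [hqdef]
            apply Finset.min'_le
            exact mem_filter.mpr ⟨heS, h1⟩
          exact absurd this (not_le.mpr h2)
      · have hUall : ∀ e ∈ S, e ≤ c := by
          intro e he
          by_contra h
          exact hU ⟨e, mem_filter.mpr ⟨he, not_le.mp h⟩⟩
        have hwS := S.min'_mem ⟨x₀, hx₀⟩
        set w := S.min' ⟨x₀, hx₀⟩ with hwdef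
        by_cases hwb : b w = i₀
        · set W := S.filter fun e => b e ≠ i₀ with hWdef
          have hWne : W.Nonempty := ⟨q₀, mem_filter.mpr ⟨hq₀S, hq₀b⟩⟩
          have hdmem := W.min'_mem hWne
          rw [mem_filter] at hdmem
          set d := W.min' hWne with hddef
          have hwd : w < d := by
            have h1 : w ≤ d := S.min'_le d hdmem.1
            have h2 : w ≠ d := fun h => hdmem.2 (h ▸ hwb)
            exact h1.lt_of_ne h2
          have hVne : (S.filter fun e => e < d).Nonempty := ⟨w, mem_filter.mpr ⟨hwS, hwd⟩⟩
          have hpmem := (S.filter fun e => e < d).max'_mem hVne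
          rw [mem_filter] at hpmem
          set p := (S.filter fun e => e < d).max' hVne with hpdef
          refine ⟨p, d, hpmem.1, hdmem.1, ?_, hdmem.2, Or.inl ⟨hpmem.2, ?_⟩⟩
          · by_contra h
            have : d ≤ p := W.min'_le p (mem_filter.mpr ⟨hpmem.1, h⟩)
            exact absurd this (not_le.mpr hpmem.2)
          · rintro e heS ⟨h1, h2⟩
            have : e ≤ p := by
              rw [hpdef]
              apply Finset.le_max'
              exact mem_filter.mpr ⟨heS, h2⟩
            exact absurd this (not_le.mpr h1)
        · have hwc : w < c := by
            have h1 : w ≤ c := S.min'_le c hcS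
            have h2 : w ≠ c := fun h => hwb (h ▸ hcb)
            exact h1.lt_of_ne h2
          refine ⟨c, w, hcS, hwS, hcb, hwb, Or.inr ⟨hwc, ?_⟩⟩
          intro e heS hep heq
          exact ⟨(S.min'_le e heS).lt_of_ne (Ne.symm heq), (hUall e heS).lt_of_ne hep⟩
    have hpq : p ≠ q := fun h => hbq (h ▸ hbp)
    set S' := (S.erase p).erase q with hS'def
    have hS'mem : ∀ x, x ∈ S' ↔ x ∈ S ∧ x ≠ p ∧ x ≠ q := by
      intro x
      simp only [hS'def, mem_erase]
      tauto
    have hS'card : S'.card = m - 2 := by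
      rw [hS'def, Finset.card_erase_of_mem (mem_erase.mpr ⟨Ne.symm hpq, hqS⟩),
        Finset.card_erase_of_mem hpS, hcard]
      omega
    have hS'filter : ∀ i : Fin n, S'.filter (fun x => b x = i) =
        ((S.filter fun x => b x = i).erase p).erase q := by
      intro i
      ext x
      simp only [mem_filter, mem_erase, hS'mem]
      tauto
    -- apply induction hypothesis
    obtain ⟨σ', h'id, h'mem, h'inv, h'ne, h'b, h'cross⟩ :=
      ih (m - 2) (by omega) S' hS'card ⟨k - 1, by omega⟩ (by
        intro i
        rw [hS'filter]
        by_cases hi : i = i₀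
        · subst hi
          have hpF : p ∈ S.filter fun x => b x = i := mem_filter.mpr ⟨hpS, hbp⟩
          have hqF : q ∉ (S.filter fun x => b x = i).erase p := by
            simp only [mem_erase, mem_filter]
            tauto
          rw [Finset.erase_eq_of_notMem hqF, Finset.card_erase_of_mem hpF]
          have h2 := hcnt i
          have h1 : 0 < (S.filter fun x => b x = i).card := card_pos.mpr ⟨p, hpF⟩
          omega
        · by_cases hiq : i = b q
          · subst hiq
            have hqF : q ∈ S.filter fun x => b x = b q := mem_filter.mpr ⟨hqS, rfl⟩
            have hpF : p ∉ S.filter fun x => b x = b q := by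
              simp only [mem_filter]
              rintro ⟨-, h⟩
              exact hi (by rw [← h, hbp])
            rw [Finset.erase_eq_of_notMem hpF,
              Finset.card_erase_of_mem hqF]
            have := hcnt (b q)
            have h1 : 0 < (S.filter fun x => b x = b q).card := card_pos.mpr ⟨q, hqF⟩
            omega
          · have hpF : p ∉ S.filter fun x => b x = i := by
              simp only [mem_filter]
              rintro ⟨-, h⟩
              exact hi (by rw [← h, hbp])
            have hqF : q ∉ (S.filter fun x => b x = i).erase p := by
              simp only [mem_erase, mem_filter]
              rintro ⟨-, -, h⟩
              exact hiq h.symm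
            rw [Finset.erase_eq_of_notMem hqF, Finset.erase_eq_of_notMem hpF]
            -- saturation argument
            by_contra hbig
            push_neg at hbig
            have h2 := hcnt i
            have hFk : (S.filter fun x => b x = i).card = k := by omega
            have hGk : (S.filter fun x => b x = i₀).card = k := by
              have h3 := hi₀max i (mem_univ i)
              have h4 := hcnt i₀
              rw [hTdef] at h3
              omega
            have hdisj : Disjoint (S.filter fun x => b x = i) (S.filter fun x => b x = i₀) := by
              rw [Finset.disjoint_left]
              intro a ha1 ha2
              rw [mem_filter] at ha1 ha2
              exact hi (ha1.2 ▸ ha2.2 ▸ rfl)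
            have hsub : (S.filter fun x => b x = i) ∪ (S.filter fun x => b x = i₀) ⊆ S :=
              Finset.union_subset (filter_subset _ _) (filter_subset _ _)
            have hcardu : ((S.filter fun x => b x = i) ∪ (S.filter fun x => b x = i₀)).card = m := by
              rw [Finset.card_union_of_disjoint hdisj, hFk, hGk]
              omega
            have heq : (S.filter fun x => b x = i) ∪ (S.filter fun x => b x = i₀) = S :=
              Finset.eq_of_subset_of_card_le hsub (by rw [hcardu, hcard])
            have : q ∈ (S.filter fun x => b x = i) ∪ (S.filter fun x => b x = i₀) := by
              rw [heq]; exact hqS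
            rw [Finset.mem_union, mem_filter, mem_filter] at this
            rcases this with ⟨-, h⟩ | ⟨-, h⟩
            · exact hiq h.symm
            · exact hbq h)
    -- define σ
    set σ : Fin N → Fin N := fun z => if z = p then q else if z = q then p else σ' z with hσdef
    have hσp : σ p = q := by simp [hσdef]
    have hσq : σ q = p := by simp [hσdef, hpq.symm]
    have hσo : ∀ z, z ≠ p → z ≠ q → σ z = σ' z := by
      intro z h1 h2
      simp [hσdef, h1, h2]
    have hσS' : ∀ z ∈ S', σ z = σ' z := by
      intro z hz
      rw [hS'mem] at hz
      exact hσo z hz.2.1 hz.2.2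
    have hσ'S' : ∀ z ∈ S', σ' z ∈ S' := h'mem
    refine ⟨σ, ?_, ?_, ?_, ?_, ?_, ?_⟩
    · intro x hx
      have h1 : x ≠ p := fun h => hx (h ▸ hpS)
      have h2 : x ≠ q := fun h => hx (h ▸ hqS)
      rw [hσo x h1 h2]
      exact h'id x (fun h => hx ((hS'mem x).mp h).1)
    · intro x hx
      by_cases h1 : x = p
      · rw [h1, hσp]; exact hqS
      by_cases h2 : x = q
      · rw [h2, hσq]; exact hpS
      · rw [hσo x h1 h2]
        exact ((hS'mem _).mp (h'mem x ((hS'mem x).mpr ⟨hx, h1, h2⟩))).1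
    · intro x hx
      by_cases h1 : x = p
      · rw [h1, hσp, hσq]
      by_cases h2 : x = q
      · rw [h2, hσq, hσp]
      · have hxS' : x ∈ S' := (hS'mem x).mpr ⟨hx, h1, h2⟩
        rw [hσo x h1 h2, hσS' _ (hσ'S' x hxS'), h'inv x hxS']
    · intro x hx
      by_cases h1 : x = p
      · rw [h1, hσp]; exact hpq.symm
      by_cases h2 : x = q
      · rw [h2, hσq]; exact hpq
      · rw [hσo x h1 h2]
        exact h'ne x ((hS'mem x).mpr ⟨hx, h1, h2⟩)
    · intro x hx
      by_cases h1 : x = p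
      · rw [h1, hσp, hbp]; exact hbq
      by_cases h2 : x = q
      · rw [h2, hσq, hbp]; exact fun h => hbq h.symm
      · rw [hσo x h1 h2]
        exact h'b x ((hS'mem x).mpr ⟨hx, h1, h2⟩)
    · -- the non-crossing property
      intro x hx y hy hne
      by_cases hx1 : x = p
      · rw [hx1] at hne ⊢
        rw [hσp] at hne ⊢
        by_cases hy1 : y = p
        · rw [hy1, hσp] at hne; exact absurd rfl hne
        by_cases hy2 : y = q
        · rw [hy2, hσq] at hne; exact absurd (Finset.pair_comm p q) hne
        · have hyS' : y ∈ S' := (hS'mem y).mpr ⟨hy, hy1, hy2⟩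
          have hσyS' : σ' y ∈ S' := hσ'S' y hyS'
          rw [hσS' y hyS']
          rcases hadj with ⟨hlt, hnb⟩ | ⟨hlt, hall⟩
          · constructor
            · rintro (⟨g1, g2⟩ | ⟨g1, g2⟩)
              · exact absurd ⟨g1, g2⟩ (hnb y hy)
              · exact absurd (lt_trans (lt_trans g1 g2) hlt) (lt_irrefl _)
            · rintro (⟨g1, g2⟩ | ⟨g1, g2⟩)
              · exact absurd ⟨g1, g2⟩ (hnb (σ' y) ((hS'mem _).mp hσyS').1)
              · exact absurd (lt_trans (lt_trans g1 g2) hlt) (lt_irrefl _)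
          · have hy' := hall y hy hy1 hy2
            have hσy' := hall (σ' y) ((hS'mem _).mp hσyS').1
              ((hS'mem _).mp hσyS').2.1 ((hS'mem _).mp hσyS').2.2
            constructor
            · intro _; exact Or.inr ⟨hσy'.1, hσy'.2⟩
            · intro _; exact Or.inr ⟨hy'.1, hy'.2⟩
      by_cases hx2 : x = q
      · rw [hx2] at hne ⊢
        rw [hσq] at hne ⊢
        by_cases hy1 : y = p
        · rw [hy1, hσp] at hne; exact absurd (Finset.pair_comm q p) hne
        by_cases hy2 : y = q
        · rw [hy2, hσq] at hne; exact absurd rfl hne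
        · have hyS' : y ∈ S' := (hS'mem y).mpr ⟨hy, hy1, hy2⟩
          have hσyS' : σ' y ∈ S' := hσ'S' y hyS'
          rw [hσS' y hyS']
          rcases hadj with ⟨hlt, hnb⟩ | ⟨hlt, hall⟩
          · constructor
            · rintro (⟨g1, g2⟩ | ⟨g1, g2⟩)
              · exact absurd (lt_trans (lt_trans g1 g2) hlt) (lt_irrefl _)
              · exact absurd ⟨g1, g2⟩ (hnb y hy)
            · rintro (⟨g1, g2⟩ | ⟨g1, g2⟩)
              · exact absurd (lt_trans (lt_trans g1 g2) hlt) (lt_irrefl _)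
              · exact absurd ⟨g1, g2⟩ (hnb (σ' y) ((hS'mem _).mp hσyS').1)
          · have hy' := hall y hy hy1 hy2
            have hσy' := hall (σ' y) ((hS'mem _).mp hσyS').1
              ((hS'mem _).mp hσyS').2.1 ((hS'mem _).mp hσyS').2.2
            constructor
            · intro _; exact Or.inl ⟨hσy'.1, hσy'.2⟩
            · intro _; exact Or.inl ⟨hy'.1, hy'.2⟩
      · have hxS' : x ∈ S' := (hS'mem x).mpr ⟨hx, hx1, hx2⟩
        have hσxS' : σ' x ∈ S' := hσ'S' x hxS'
        rw [hσS' x hxS']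
        by_cases hy1 : y = p
        · rw [hy1]
          rw [hσp]
          have hux := (hS'mem _).mp hxS'
          have huσx := (hS'mem _).mp hσxS'
          rcases hadj with ⟨hlt, hnb⟩ | ⟨hlt, hall⟩
          · exact adjacent_sep hlt hux.2.1 hux.2.2 huσx.2.1 huσx.2.2
              (hnb x hx) (hnb (σ' x) huσx.1)
          · exact wrap_sep (hall x hx hux.2.1 hux.2.2)
              (hall (σ' x) huσx.1 huσx.2.1 huσx.2.2)
        by_cases hy2 : y = q
        · rw [hy2]
          rw [hσq]
          have hux := (hS'mem _).mp hxS'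
          have huσx := (hS'mem _).mp hσxS'
          rcases hadj with ⟨hlt, hnb⟩ | ⟨hlt, hall⟩
          · exact (adjacent_sep hlt hux.2.1 hux.2.2 huσx.2.1 huσx.2.2
              (hnb x hx) (hnb (σ' x) huσx.1)).symm
          · exact (wrap_sep (hall x hx hux.2.1 hux.2.2)
              (hall (σ' x) huσx.1 huσx.2.1 huσx.2.2)).symm
        · have hyS' : y ∈ S' := (hS'mem y).mpr ⟨hy, hy1, hy2⟩
          rw [hσS' y hyS']
          refine h'cross x hxS' y hyS' ?_
          rw [hσS' x hxS', hσS' y hyS'] at hne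
          exact hne

/-- Geometric form: a perfect matching of the `N`-th roots of unity by pairwise
disjoint straight chords, no chord joining two points of the same block. -/
theorem stmt_1 (n N : ℕ) (hn : 1 ≤ n) (hNeven : Even N)
    (δ : Fin n → ℕ) (hsum : ∑ i, δ i = N) (hmax : ∀ i, 2 * δ i ≤ N)
    (b : Fin N → Fin n)
    (hb : ∀ (x : Fin N) (i : Fin n), b x = i ↔
      (∑ i' ∈ Finset.univ.filter (fun i' => i' < i), δ i') ≤ (x : ℕ) ∧
      (x : ℕ) < ∑ i' ∈ Finset.univ.filter (fun i' => i' ≤ i), δ i')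
    (P : Fin N → ℂ)
    (hP : ∀ x : Fin N, P x = Complex.exp (2 * Real.pi * Complex.I * (x : ℕ) / N)) :
    ∃ σ : Fin N → Fin N,
      Function.Involutive σ ∧
      (∀ x, σ x ≠ x) ∧
      (∀ x, b (σ x) ≠ b x) ∧
      (∀ x y : Fin N, ({x, σ x} : Finset (Fin N)) ≠ ({y, σ y} : Finset (Fin N)) →
        Disjoint (openSegment ℝ (P x) (P (σ x))) (openSegment ℝ (P y) (P (σ y)))) := by
  -- counting: each block has at most N/2 points
  have hcount : ∀ i : Fin n, 2 * ((univ : Finset (Fin N)).filter fun x => b x = i).card ≤ N := by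
    intro i
    have hsplit : ∑ i' ∈ univ.filter (fun i' => i' ≤ i), δ i' =
        (∑ i' ∈ univ.filter (fun i' => i' < i), δ i') + δ i := by
      have hins : univ.filter (fun i' : Fin n => i' ≤ i) =
          insert i (univ.filter (fun i' => i' < i)) := by
        ext j
        simp only [mem_insert, mem_filter, mem_univ, true_and]
        rw [le_iff_lt_or_eq]
        tauto
      rw [hins, Finset.sum_insert (by simp)]
      omega
    have hcard : ((univ : Finset (Fin N)).filter fun x => b x = i).card ≤ δ i := by
      have := Finset.card_le_card_of_injOn
        (s := (univ : Finset (Fin N)).filter fun x => b x = i) (fun x : Fin N => (x : ℕ))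
        (t := Finset.Ico (∑ i' ∈ univ.filter (fun i' => i' < i), δ i')
          ((∑ i' ∈ univ.filter (fun i' => i' < i), δ i') + δ i))
        (by
          intro x hx
          rw [Finset.mem_coe, mem_filter] at hx
          have h2 := (hb x i).mp hx.2
          rw [Finset.mem_coe, Finset.mem_Ico]
          exact ⟨h2.1, hsplit ▸ h2.2⟩)
        (Fin.val_injective.injOn)
      rwa [Nat.card_Ico, Nat.add_sub_cancel_left] at this
    have := hmax i
    omega
  obtain ⟨σ, hid, hmem, hinv, hne, hbne, hcross⟩ :=
    matching_exists b N univ (by simp) hNeven (by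
      intro i
      simpa using hcount i)
  have hPpt : ∀ z : Fin N, P z = pt (θf N z) := by
    intro z
    rw [hP, pt, θf]
    congr 1
    push_cast
    ring
  refine ⟨σ, fun x => hinv x (mem_univ x), fun x => hne x (mem_univ x),
    fun x => hbne x (mem_univ x), ?_⟩
  intro x y hne'
  have hinvx := hinv x (mem_univ x)
  have hinvy := hinv y (mem_univ y)
  have hxσx : x ≠ σ x := fun h => hne x (mem_univ x) h.symm
  have hyx : y ≠ x := by
    rintro rfl; exact hne' rfl
  have hyσx : y ≠ σ x := by
    rintro rfl
    exact hne' (by rw [hinvx, Finset.pair_comm])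
  have hσyx : σ y ≠ x := by
    intro h
    exact hyσx (by rw [← h, hinvy])
  have hσyσx : σ y ≠ σ x := by
    intro h
    have : y = x := by rw [← hinvy, h, hinvx]
    exact hyx this
  rw [hPpt x, hPpt (σ x), hPpt y, hPpt (σ y)]
  exact main_geom x (σ x) y (σ y) hxσx hyx hyσx hσyx hσyσx
    (hcross x (mem_univ x) y (mem_univ y) hne')
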